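/- arXiv:q-bio/0610057 — 4 statements merged into one kernel-verified Lean document; each statement's English description precedes it below -/
import Mathlib

section
/- For p ∈ [0,1] and β₀, τ₀ > 0, let p₁ = 1 - p + p·exp(-2β₀τ₀) and p₁ᵇᵒⁿᵈ = (1 - p + p·exp(-β₀τ₀))². Then p₁ - p₁ᵇᵒⁿᵈ = p(1-p)(1 - exp(-β₀τ₀))², and hence p₁ ≥ p₁ᵇᵒⁿᵈ with equality if and only if p = 0 or p = 1. -/
open Real Set

/-- For `p ∈ [0,1]` and `β₀, τ₀ > 0`, with
`p₁ = 1 - p + p·exp(-2β₀τ₀)` and `p₁ᵇᵒⁿᵈ = (1 - p + p·exp(-β₀τ₀))²`, we have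
`p₁ - p₁ᵇᵒⁿᵈ = p(1-p)(1 - exp(-β₀τ₀))²`, hence `p₁ ≥ p₁ᵇᵒⁿᵈ` with equality iff
`p = 0` or `p = 1`. -/
theorem stmt_0 (p β₀ τ₀ : ℝ) (hp : p ∈ Icc (0:ℝ) 1) (hβ : 0 < β₀) (hτ : 0 < τ₀) :
    (1 - p + p * exp (-(2 * β₀ * τ₀))) - (1 - p + p * exp (-(β₀ * τ₀)))^2
      = p * (1 - p) * (1 - exp (-(β₀ * τ₀)))^2 ∧
    (1 - p + p * exp (-(β₀ * τ₀)))^2 ≤ 1 - p + p * exp (-(2 * β₀ * τ₀)) ∧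
    ((1 - p + p * exp (-(2 * β₀ * τ₀))) = (1 - p + p * exp (-(β₀ * τ₀)))^2 ↔
      p = 0 ∨ p = 1) := by
  obtain ⟨hp0, hp1⟩ := hp
  have hx : exp (-(2 * β₀ * τ₀)) = exp (-(β₀ * τ₀)) * exp (-(β₀ * τ₀)) := by
    rw [← Real.exp_add]; ring_nf
  set x := exp (-(β₀ * τ₀)) with hxdef
  have hxlt : x < 1 := by
    rw [hxdef]
    apply exp_lt_one_iff.mpr
    nlinarith
  have hkey : (1 - p + p * exp (-(2 * β₀ * τ₀))) - (1 - p + p * x)^2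
      = p * (1 - p) * (1 - x)^2 := by
    rw [hx]; ring
  refine ⟨hkey, ?_, ?_⟩
  · nlinarith [mul_nonneg (mul_nonneg hp0 (by linarith : (0:ℝ) ≤ 1 - p)) (sq_nonneg (1 - x))]
  · constructor
    · intro h
      have h0 : p * (1 - p) * (1 - x)^2 = 0 := by linarith [hkey, h]
      have hne : (1 - x)^2 ≠ 0 := pow_ne_zero _ (by linarith)
      rcases mul_eq_zero.mp h0 with h1 | h1
      · rcases mul_eq_zero.mp h1 with h2 | h2
        · exact Or.inl h2
        · exact Or.inr (by linarith)
      · exact absurd h1 hne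
    · rintro (rfl | rfl) <;> nlinarith [hkey]
end

section
/- Suppose H_r and H_u are power series with nonnegative coefficients on [0,1] satisfying H_r(z) = z·G_r(H_r(z), 1, H_u(z)) and H_u(z) = z·G_u(H_r(z), 1, H_u(z)), where G_r = G_u as functions. Then H_r(z) = H_u(z) for all z ∈ [0,1], and the common function H₁ satisfies H₁(z) = (z/𝒢′(1))·𝒢′(1 - T + T·H₁(z)). -/
open MeasureTheory Set

/-- Suppose `H_r` and `H_u` satisfy
`H_r(z) = z·G_r(H_r(z), 1, H_u(z))` and `H_u(z) = z·G_u(H_r(z), 1, H_u(z))` on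
`[0,1]`, where `G_r = G_u` (as given by the common integral formula
`(T𝒢'(1))⁻¹ ∫ 𝒢'(g(x,y,u|τ)) T_τ dF(τ)`). Then `H_r(z) = H_u(z)` for all
`z ∈ [0,1]`, and the common function satisfies
`H₁(z) = (z/𝒢'(1))·𝒢'(1 - T + T·H₁(z))`. -/
theorem stmt_10 (F : Measure ℝ) [IsProbabilityMeasure F]
    (Tt : ℝ → ℝ) (hTtmeas : Measurable Tt) (hTt01 : ∀ τ, Tt τ ∈ Icc (0:ℝ) 1)
    (hTtInt : Integrable Tt F)
    (T : ℝ) (hT : T = ∫ s, Tt s ∂F) (hT0 : 0 < T)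
    (𝒢d : ℝ → ℝ) -- 𝒢d = 𝒢', the derivative of the contact-network degree pgf
    (hd1 : 𝒢d 1 ≠ 0)
    (Gr Gu : ℝ → ℝ → ℝ → ℝ)
    (hGrGu : Gr = Gu)
    (hGr : ∀ x y u : ℝ, Gr x y u =
      (∫ τ, 𝒢d ((1 - Tt τ) * (1 - T) + (1 - Tt τ) * T * x
          + Tt τ * (1 - T) * y + Tt τ * T * u) * Tt τ ∂F) / (T * 𝒢d 1))
    (Hr Hu : ℝ → ℝ)
    (hHr : ∀ z ∈ Icc (0:ℝ) 1, Hr z = z * Gr (Hr z) 1 (Hu z))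
    (hHu : ∀ z ∈ Icc (0:ℝ) 1, Hu z = z * Gu (Hr z) 1 (Hu z)) :
    ∀ z ∈ Icc (0:ℝ) 1,
      Hr z = Hu z ∧ Hr z = z / 𝒢d 1 * 𝒢d (1 - T + T * Hr z) := by
  intro z hz
  have heq : Hr z = Hu z :=
    (hHr z hz).trans (by rw [hGrGu]; exact (hHu z hz).symm)
  refine ⟨heq, ?_⟩
  have key : Gr (Hr z) 1 (Hu z) = 𝒢d (1 - T + T * Hr z) / 𝒢d 1 := by
    rw [hGr]
    have harg : ∀ τ : ℝ, (1 - Tt τ) * (1 - T) + (1 - Tt τ) * T * Hr z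
        + Tt τ * (1 - T) * 1 + Tt τ * T * Hu z = 1 - T + T * Hr z := by
      intro τ; rw [← heq]; ring
    have h2 : (∫ τ, 𝒢d ((1 - Tt τ) * (1 - T) + (1 - Tt τ) * T * Hr z
          + Tt τ * (1 - T) * 1 + Tt τ * T * Hu z) * Tt τ ∂F)
        = ∫ τ, 𝒢d (1 - T + T * Hr z) * Tt τ ∂F := by
      congr 1; funext τ; rw [harg τ]
    rw [h2, integral_const_mul, ← hT]
    field_simp
  conv_lhs => rw [hHr z hz, key]
  field_simp
end

section
/- Let 𝒢 be a pgf (power series with nonnegative coefficients, 𝒢(1)=1), T_τ a [0,1]-valued random variable with mean T, and let H_*^{out}(z) ≥ H_*^{in}(z) for a fixed z ∈ [0,1]. Then H^{out}(z) := z·E[𝒢(1 - T_τ + T_τ·H_*^{out}(z))] ≥ z·𝒢(1 - T + T·H_*^{in}(z)) =: H^{in}(z). Hence the pgf of out-component sizes dominates the pgf of in-component sizes pointwise on [0,1]. -/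
open MeasureTheory Set

/-- One-dimensional Jensen inequality for a convex function on `[0,1]`,
without continuity hypotheses, via a supporting line. -/
lemma jensen_aux {Ω : Type*} [MeasurableSpace Ω] (μ : Measure Ω)
    [IsProbabilityMeasure μ]
    (g : ℝ → ℝ) (hconv : ConvexOn ℝ (Icc (0:ℝ) 1) g)
    (f : Ω → ℝ) (hf01 : ∀ ω, f ω ∈ Icc (0:ℝ) 1) (hfi : Integrable f μ)
    (hgi : Integrable (fun ω => g (f ω)) μ) :
    g (∫ ω, f ω ∂μ) ≤ ∫ ω, g (f ω) ∂μ := by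
  set c : ℝ := ∫ ω, f ω ∂μ with hc
  have hc0 : 0 ≤ c := integral_nonneg fun ω => (hf01 ω).1
  have hc1 : c ≤ 1 := by
    have := integral_mono hfi (integrable_const (1:ℝ)) (fun ω => (hf01 ω).2)
    simpa using this
  have hcmem : c ∈ Icc (0:ℝ) 1 := ⟨hc0, hc1⟩
  rcases eq_or_lt_of_le hc0 with h0 | h0
  · -- c = 0 : f = 0 a.e.
    have hf0 : f =ᵐ[μ] 0 :=
      (integral_eq_zero_iff_of_nonneg (fun ω => (hf01 ω).1) hfi).mp h0.symm
    have : (fun ω => g (f ω)) =ᵐ[μ] fun _ => g 0 := by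
      filter_upwards [hf0] with ω hω; simp [hω]
    rw [integral_congr_ae this, integral_const]
    simp [← h0]
  rcases eq_or_lt_of_le hc1 with h1 | h1
  · -- c = 1 : f = 1 a.e.
    have hsub : Integrable (fun ω => 1 - f ω) μ := (integrable_const (1:ℝ)).sub hfi
    have hzero : (∫ ω, (1 - f ω) ∂μ) = 0 := by
      rw [integral_sub (integrable_const 1) hfi, integral_const]
      simp [← hc, h1]
    have hf1 : (fun ω => 1 - f ω) =ᵐ[μ] 0 :=
      (integral_eq_zero_iff_of_nonneg (fun ω => by
        have := (hf01 ω).2; simp only [Pi.zero_apply]; linarith) hsub).mp hzero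
    have : (fun ω => g (f ω)) =ᵐ[μ] fun _ => g 1 := by
      filter_upwards [hf1] with ω hω
      simp only [Pi.zero_apply] at hω
      have : f ω = 1 := by linarith
      simp [this]
    rw [integral_congr_ae this, integral_const]
    simp [h1]
  -- 0 < c < 1 : supporting line at c
  set S : Set ℝ := (fun x => (g c - g x) / (c - x)) '' Ico 0 c with hS
  have hSne : S.Nonempty := ⟨(g c - g 0) / (c - 0), ⟨0, ⟨le_refl _, h0⟩, rfl⟩⟩
  have hSbdd : BddAbove S := by
    refine ⟨(g 1 - g c) / (1 - c), ?_⟩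
    rintro y ⟨x, hx, rfl⟩
    exact hconv.slope_mono_adjacent ⟨hx.1, (hx.2.trans h1).le⟩
      (by norm_num : (1:ℝ) ∈ Icc (0:ℝ) 1) hx.2 h1
  set s : ℝ := sSup S with hs
  have key : ∀ t ∈ Icc (0:ℝ) 1, g c + s * (t - c) ≤ g t := by
    intro t ht
    rcases lt_trichotomy t c with hlt | heq | hgt
    · have h1' : (g c - g t) / (c - t) ≤ s := le_csSup hSbdd ⟨t, ⟨ht.1, hlt⟩, rfl⟩
      rw [div_le_iff₀ (by linarith)] at h1'
      nlinarith
    · simp [heq]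
    · have h2' : s ≤ (g t - g c) / (t - c) := by
        apply csSup_le hSne
        rintro y ⟨x, hx, rfl⟩
        exact hconv.slope_mono_adjacent ⟨hx.1, ((hx.2.trans hgt).le.trans ht.2)⟩ ht hx.2 hgt
      rw [le_div_iff₀ (by linarith)] at h2'
      nlinarith
  have hfic : Integrable (fun ω => f ω - c) μ := hfi.sub (integrable_const c)
  have hfic' : Integrable (fun ω => s * (f ω - c)) μ := hfic.const_mul s
  have hint1 : Integrable (fun ω => g c + s * (f ω - c)) μ :=
    (integrable_const (g c)).add hfic'
  have hle : ∀ ω, g c + s * (f ω - c) ≤ g (f ω) := fun ω => key _ (hf01 ω)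
  have hmono := integral_mono hint1 hgi hle
  have heval : (∫ ω, (g c + s * (f ω - c)) ∂μ) = g c := by
    rw [integral_add (integrable_const _) hfic', integral_const,
      integral_const_mul, integral_sub hfi (integrable_const c), integral_const]
    simp [← hc]
  linarith [heval ▸ hmono]

/-- Let `𝒢` be a pgf (convex, nondecreasing on `[0,1]`, `𝒢(1)=1`),
`T_τ` a `[0,1]`-valued random variable with mean `T`, and suppose
`H_*^{out}(z) ≥ H_*^{in}(z)` for `z ∈ [0,1]`. Then
`H^{out}(z) = z·E[𝒢(1 - T_τ + T_τ·H_*^{out}(z))] ≥ z·𝒢(1 - T + T·H_*^{in}(z)) = H^{in}(z)`,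
i.e. the pgf of out-component sizes dominates the pgf of in-component sizes
pointwise on `[0,1]`. -/
theorem stmt_14 {Ω : Type*} [m0 : MeasurableSpace Ω] (μ : Measure Ω)
    [IsProbabilityMeasure μ]
    (𝒢 : ℝ → ℝ) (h𝒢conv : ConvexOn ℝ (Icc (0:ℝ) 1) 𝒢)
    (h𝒢mono : MonotoneOn 𝒢 (Icc (0:ℝ) 1)) (h𝒢1 : 𝒢 1 = 1)
    (Tt : Ω → ℝ) (hTtmeas : Measurable Tt) (hTt01 : ∀ ω, Tt ω ∈ Icc (0:ℝ) 1)
    (hTtInt : Integrable Tt μ)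
    (T : ℝ) (hT : T = ∫ ω, Tt ω ∂μ)
    (Hso Hsi : ℝ → ℝ)
    (hHsomem : ∀ z ∈ Icc (0:ℝ) 1, Hso z ∈ Icc (0:ℝ) 1)
    (hHsimem : ∀ z ∈ Icc (0:ℝ) 1, Hsi z ∈ Icc (0:ℝ) 1)
    (hdom : ∀ z ∈ Icc (0:ℝ) 1, Hsi z ≤ Hso z)
    (hInt : ∀ z ∈ Icc (0:ℝ) 1,
      Integrable (fun ω => 𝒢 (1 - Tt ω + Tt ω * Hso z)) μ) :
    ∀ z ∈ Icc (0:ℝ) 1,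
      z * 𝒢 (1 - T + T * Hsi z)
        ≤ z * ∫ ω, 𝒢 (1 - Tt ω + Tt ω * Hso z) ∂μ := by
  intro z hz
  obtain ⟨ha0, ha1⟩ := hHsimem z hz
  obtain ⟨hb0, hb1⟩ := hHsomem z hz
  set a := Hsi z
  set b := Hso z
  have hab : a ≤ b := hdom z hz
  have hT0 : 0 ≤ T := hT ▸ integral_nonneg fun ω => (hTt01 ω).1
  have hT1 : T ≤ 1 := by
    rw [hT]
    have := integral_mono hTtInt (integrable_const (1:ℝ)) (fun ω => (hTt01 ω).2)
    simpa using this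
  have hmem1 : 1 - T + T * a ∈ Icc (0:ℝ) 1 := ⟨by nlinarith, by nlinarith⟩
  have hmem2 : 1 - T + T * b ∈ Icc (0:ℝ) 1 := ⟨by nlinarith, by nlinarith⟩
  have step1 : 𝒢 (1 - T + T * a) ≤ 𝒢 (1 - T + T * b) :=
    h𝒢mono hmem1 hmem2 (by nlinarith)
  -- Jensen for f ω = 1 - Tt ω + Tt ω * b
  have hsub : Integrable (fun ω => 1 - Tt ω) μ := (integrable_const (1:ℝ)).sub hTtInt
  have hmul : Integrable (fun ω => Tt ω * b) μ := hTtInt.mul_const b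
  have hfi : Integrable (fun ω => 1 - Tt ω + Tt ω * b) μ := hsub.add hmul
  have hintf : (∫ ω, (1 - Tt ω + Tt ω * b) ∂μ) = 1 - T + T * b := by
    rw [integral_add hsub hmul, integral_sub (integrable_const 1) hTtInt,
      integral_mul_const, integral_const]
    simp [hT]
  have step2 : 𝒢 (1 - T + T * b) ≤ ∫ ω, 𝒢 (1 - Tt ω + Tt ω * b) ∂μ := by
    have hmemf : ∀ ω, 1 - Tt ω + Tt ω * b ∈ Icc (0:ℝ) 1 := fun ω =>
      ⟨by nlinarith [(hTt01 ω).1, (hTt01 ω).2], by nlinarith [(hTt01 ω).1, (hTt01 ω).2]⟩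
    have := jensen_aux μ 𝒢 h𝒢conv (fun ω => 1 - Tt ω + Tt ω * b) hmemf hfi (hInt z hz)
    rwa [hintf] at this
  exact mul_le_mul_of_nonneg_left (step1.trans step2) hz.1
end

section
/- Consider the stochastic SIR epidemic determined by importation times (t_{0i}), recovery periods r, and infectious contact intervals τ_{ij} ∈ (0,∞], run by the rule t_j = min over i of (t_{0j}, t_i + τ_{ij}) realized through the epidemic algorithm. Define the epidemic percolation network with an edge from i to j whenever τ_{ij} < ∞. Then node j is eventually infected (t_j < ∞) if and only if j lies in the out-component, in this network, of some node i with t_{0i} < ∞. -/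
open scoped ENNReal

/-- For the stochastic SIR epidemic determined by importation times
`t0`, and infectious contact intervals `τ i j ∈ (0,∞]`, with infection times `t`
given as the greatest solution of `t j = min (t0 j) (⨅ i, t i + τ i j)`
(the epidemic algorithm), node `j` is eventually infected (`t j < ∞`) iff `j`
lies in the out-component (directed reachability along edges with `τ i j < ∞`)
of some node `i` with `t0 i < ∞`. -/
theorem stmt_16 (n : ℕ) (τ : Fin n → Fin n → ℝ≥0∞) (hτ : ∀ i j, 0 < τ i j)
    (t0 t : Fin n → ℝ≥0∞)
    (hsol : ∀ j, t j = min (t0 j) (⨅ i, t i + τ i j))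
    (hgreatest : ∀ s : Fin n → ℝ≥0∞,
      (∀ j, s j ≤ t0 j) → (∀ i j, s j ≤ s i + τ i j) → s ≤ t) :
    ∀ j : Fin n, t j < ⊤ ↔
      ∃ i : Fin n, t0 i < ⊤ ∧ Relation.ReflTransGen (fun a b => τ a b < ⊤) i j := by
  classical
  -- basic consequences of hsol
  have ht0 : ∀ j, t j ≤ t0 j := fun j => (hsol j) ▸ min_le_left _ _
  have hstep : ∀ i j, t j ≤ t i + τ i j := fun i j =>
    (hsol j) ▸ (min_le_right _ _).trans (iInf_le _ i)
  set R : Fin n → Prop :=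
    fun j => ∃ i, t0 i < ⊤ ∧ Relation.ReflTransGen (fun a b => τ a b < ⊤) i j with hR
  intro j
  constructor
  · intro htj
    by_contra hnot
    -- construct s
    set s : Fin n → ℝ≥0∞ := fun k => if R k then t k else ⊤ with hs
    have hle : s ≤ t := by
      apply hgreatest
      · intro k
        by_cases hk : R k
        · simp only [hs, if_pos hk]; exact ht0 k
        · have : t0 k = ⊤ := by
            by_contra h
            exact hk ⟨k, lt_top_iff_ne_top.mpr h, Relation.ReflTransGen.refl⟩
          simp [this]
      · intro i k
        by_cases hi : R i
        · by_cases hτik : τ i k < ⊤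
          · have hk : R k := by
              obtain ⟨m, hm, hpath⟩ := hi
              exact ⟨m, hm, hpath.tail hτik⟩
            simp only [hs, if_pos hk, if_pos hi]
            exact hstep i k
          · have : τ i k = ⊤ := by simpa using hτik
            simp [this]
        · simp [hs, if_neg hi]
    have := hle j
    rw [hs] at this
    simp only [if_neg (show ¬ R j from hnot)] at this
    exact htj.ne (top_le_iff.mp this)
  · rintro ⟨i, hi, hpath⟩
    induction hpath with
    | refl => exact lt_of_le_of_lt (ht0 i) hi
    | tail hab hbc ih =>
        exact lt_of_le_of_lt (hstep _ _) (ENNReal.add_lt_top.mpr ⟨ih, hbc⟩)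
end
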